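/- For n ≥ 2 and odd l > 1, let f_i ∈ ℤ[u_1, …, u_{n-1}] be the unique polynomial with sym(l·ϖ_i) = f_i(sym(ϖ_1), …, sym(ϖ_{n-1})) in the invariant ring (ℤP)^W of the weight lattice of sl_n. With the degree reverse lexicographic order with u_1 > ⋯ > u_{n-1}, the leading term of f_i is u_i^l, and every other monomial appearing in f_i has total degree ≤ l and all exponents < l. -/

import Mathlib

open MvPolynomial

/-- The degree reverse lexicographic order with `u_1 > ⋯ > u_{n-1}` (variables indexed so
that a smaller index is a bigger variable): `α <_drl β` iff `deg α < deg β`, or the total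
degrees agree and at the last index where they differ, `β` has the smaller exponent. -/
def drlLt {m : ℕ} (α β : Fin m →₀ ℕ) : Prop :=
  (∑ j, α j) < (∑ j, β j) ∨
  ((∑ j, α j) = (∑ j, β j) ∧ ∃ i, β i < α i ∧ ∀ j, i < j → α j = β j)

namespace Stmt14Aux

open Finset AddMonoidAlgebra

variable {n : ℕ}

/-- The exponent `l·1_S`. -/
noncomputable def DD (l : ℕ) (S : Finset (Fin n)) : Fin n →₀ ℕ :=
  ∑ j ∈ S, Finsupp.single j l

lemma DD_insert {l : ℕ} {a : Fin n} {S : Finset (Fin n)} (h : a ∉ S) :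
    DD l (insert a S) = Finsupp.single a l + DD l S :=
  Finset.sum_insert h

lemma DD_apply (l : ℕ) (S : Finset (Fin n)) (j : Fin n) :
    DD l S j = if j ∈ S then l else 0 := by
  classical
  rw [DD, Finsupp.finset_sum_apply]
  simp_rw [Finsupp.single_apply]
  exact Finset.sum_ite_eq' S j fun _ => l

lemma DD_sum (l : ℕ) (S : Finset (Fin n)) : (∑ j, DD l S j) = S.card * l := by
  simp_rw [DD_apply]
  rw [Finset.sum_ite_mem, Finset.univ_inter, Finset.sum_const, smul_eq_mul]

lemma DD_injective {l : ℕ} (hl : l ≠ 0) {S S' : Finset (Fin n)} (h : DD l S = DD l S') :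
    S = S' := by
  ext j
  have hj := DFunLike.congr_fun h j
  rw [DD_apply, DD_apply] at hj
  by_cases h1 : j ∈ S <;> by_cases h2 : j ∈ S' <;> simp [h1, h2] at hj ⊢ <;> omega

lemma prod_X_pow (l : ℕ) (S : Finset (Fin n)) :
    (∏ j ∈ S, (X j : MvPolynomial (Fin n) ℤ) ^ l) = monomial (DD l S) 1 := by
  classical
  induction S using Finset.induction with
  | empty => simp [DD]
  | insert _ _ h ih =>
    rw [Finset.prod_insert h, ih, X_pow_eq_monomial, monomial_mul, one_mul, DD_insert h]

lemma rhs_eq (k l : ℕ) :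
    aeval (fun j : Fin n => (X j : MvPolynomial (Fin n) ℤ) ^ l) (esymm (Fin n) ℤ k)
      = ∑ S ∈ powersetCard k univ, monomial (DD l S) 1 := by
  rw [esymm, map_sum]
  refine Finset.sum_congr rfl fun S _ => ?_
  rw [map_prod]
  simp_rw [aeval_X]
  exact prod_X_pow l S

lemma esymm_isHomog (k : ℕ) : (esymm (Fin n) ℤ k).IsHomogeneous k := by
  rw [esymm]
  apply IsHomogeneous.sum
  intro S hS
  have := IsHomogeneous.prod S (fun j => (X j : MvPolynomial (Fin n) ℤ)) (fun _ => 1)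
    (fun j _ => isHomogeneous_X _ _)
  rw [Finset.sum_const, smul_eq_mul, mul_one] at this
  rwa [(Finset.mem_powersetCard.1 hS).2] at this

/-- weighted degree -/
def WW (α : Fin n →₀ ℕ) : ℕ := ∑ j : Fin n, ((j : ℕ) + 1) * α j

lemma degree_eq_sum_univ (d : Fin n →₀ ℕ) : d.degree = ∑ j, d j := by
  rw [Finsupp.degree]
  exact Finset.sum_subset (Finset.subset_univ _)
    (fun j _ hj => Finsupp.notMem_support_iff.1 hj)

lemma P_isHomog (α : Fin n →₀ ℕ) (c : ℤ) :
    (esymmAlgHomMonomial (Fin n) α c).IsHomogeneous (WW α) := by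
  rw [esymmAlgHomMonomial, esymmAlgHom_apply, aeval_monomial]
  have h1 : (α.prod fun (j : Fin n) e => (esymm (Fin n) ℤ ((j : ℕ) + 1)) ^ e).IsHomogeneous
      (WW α) := by
    rw [Finsupp.prod_fintype _ _ (fun j => pow_zero _)]
    exact IsHomogeneous.prod univ (fun j : Fin n => (esymm (Fin n) ℤ ((j : ℕ) + 1)) ^ (α j))
      (fun j : Fin n => ((j : ℕ) + 1) * α j)
      (fun j _ => (esymm_isHomog (n := n) ((j : ℕ) + 1)).pow (α j))
  have h2 := (isHomogeneous_C (Fin n) c).mul h1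
  rw [zero_add] at h2
  rwa [show (algebraMap ℤ (MvPolynomial (Fin n) ℤ)) c = C c from rfl]

/-- the accumulate finsupp -/
noncomputable def accF (α : Fin n →₀ ℕ) : Fin n →₀ ℕ :=
  Finsupp.equivFunOnFinite.symm (Fin.accumulate n n ⇑α)

lemma accF_apply (α : Fin n →₀ ℕ) (j : Fin n) :
    accF α j = ∑ i ∈ univ.filter (fun i : Fin n => (j : ℕ) ≤ (i : ℕ)), α i := by
  show Fin.accumulate n n ⇑α j = _
  rw [Fin.accumulate_apply]

lemma accF_injective : Function.Injective (accF (n := n)) := by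
  intro a b h
  have h2 : Fin.accumulate n n ⇑a = Fin.accumulate n n ⇑b := by
    have := congrArg (⇑Finsupp.equivFunOnFinite) h
    rwa [accF, accF, Equiv.apply_symm_apply, Equiv.apply_symm_apply] at this
  exact DFunLike.ext' (Fin.accumulate_injective le_rfl h2)

lemma supDegree_P {α : Fin n →₀ ℕ} {c : ℤ} (hc : c ≠ 0) :
    supDegree toLex (esymmAlgHomMonomial (Fin n) α c) = toLex (accF α) := by
  have h := supDegree_esymmAlgHomMonomial (r := c) hc α (le_rfl : n ≤ n)
  rw [← toLex_ofLex (supDegree toLex (esymmAlgHomMonomial (Fin n) α c))]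
  congr 1
  exact DFunLike.ext' h

lemma lex_le_coord0 (h0 : 0 < n) {x y : Fin n →₀ ℕ} (h : toLex x ≤ toLex y) :
    x ⟨0, h0⟩ ≤ y ⟨0, h0⟩ := by
  by_contra h'
  refine (not_lt_of_ge h) ?_
  exact ⟨⟨0, h0⟩, fun d hd => absurd hd (by simp [Fin.lt_def]), lt_of_not_ge h'⟩

lemma sum_single_univ (a : Fin n) (b : ℕ) : (∑ j, (Finsupp.single a b) j) = b := by
  simp [Finsupp.single_apply]

end Stmt14Aux

namespace Stmt14Aux

open Finset AddMonoidAlgebra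

set_option synthInstance.maxHeartbeats 1000000 in
set_option maxHeartbeats 1000000 in
/-- Key structural facts about `F`. -/
lemma keyF {n l k : ℕ} (h0 : 0 < n) (hl : 0 < l) (hk : k < n)
    (F : MvPolynomial (Fin n) ℤ)
    (hF : aeval (fun j : Fin n => esymm (Fin n) ℤ ((j : ℕ) + 1)) F =
          aeval (fun j : Fin n => (X j : MvPolynomial (Fin n) ℤ) ^ l)
            (esymm (Fin n) ℤ (k + 1))) :
    F.coeff (Finsupp.single ⟨k, hk⟩ l) = 1 ∧
    ∀ α ∈ F.support, (∑ j : Fin n, ((j : ℕ) + 1) * α j) = (k + 1) * l ∧ (∑ j, α j) ≤ l := by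
  classical
  set ik : Fin n := ⟨k, hk⟩ with hik
  set RHS := aeval (fun j : Fin n => (X j : MvPolynomial (Fin n) ℤ) ^ l)
    (esymm (Fin n) ℤ (k + 1)) with hRHSdef
  set lam : Fin n →₀ ℕ := DD l (Iic ik) with hlam
  have hIic : (Iic ik).card = k + 1 := by rw [Fin.card_Iic]
  have hIicmem : Iic ik ∈ powersetCard (k + 1) (univ : Finset (Fin n)) :=
    Finset.mem_powersetCard.2 ⟨Finset.subset_univ _, hIic⟩
  have hrhs : RHS = ∑ S ∈ powersetCard (k + 1) univ, monomial (DD l S) 1 := rhs_eq _ _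
  have hcoefflam : coeff lam RHS = 1 := by
    rw [hrhs, MvPolynomial.coeff_sum]
    simp_rw [coeff_monomial]
    rw [Finset.sum_eq_single_of_mem (Iic ik) hIicmem]
    · rw [if_pos rfl]
    · intro S _ hS
      exact if_neg (fun h => hS (DD_injective hl.ne' h))
  have hEtoRHS : ((esymmAlgHom (Fin n) ℤ n) F).val = RHS := by
    rw [esymmAlgHom_apply]; exact hF
  have hsum : ((esymmAlgHom (Fin n) ℤ n) F).val
      = ∑ α ∈ F.support, esymmAlgHomMonomial (Fin n) α (F.coeff α) := by
    conv_lhs => rw [F.as_sum]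
    rw [map_sum (esymmAlgHom (Fin n) ℤ n), AddSubmonoidClass.coe_finset_sum]
    rfl
  have hF0 : F ≠ 0 := by
    rintro rfl
    rw [map_zero, ZeroMemClass.coe_zero] at hEtoRHS
    rw [← hEtoRHS] at hcoefflam
    simp at hcoefflam
  obtain ⟨α0, hα0mem, hα0max⟩ := Finset.exists_max_image F.support
    (fun α => toLex (accF α)) (Finset.nonempty_iff_ne_empty.2 (fun h => hF0 (MvPolynomial.support_eq_empty.1 h)))
  have hother : ∀ β ∈ F.support, ∀ γ : Fin n →₀ ℕ, toLex (accF β) < toLex γ →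
      coeff γ (esymmAlgHomMonomial (Fin n) β (F.coeff β)) = 0 := by
    intro β hβ γ hlt
    apply AddMonoidAlgebra.apply_eq_zero_of_not_le_supDegree (D := ⇑toLex)
    rw [supDegree_P (mem_support_iff.1 hβ)]
    exact hlt.not_ge
  have hlead : ∀ (β : Fin n →₀ ℕ), β ∈ F.support →
      coeff (accF β) (esymmAlgHomMonomial (Fin n) β (F.coeff β)) = F.coeff β := by
    intro β hβ
    have hP := leadingCoeff_esymmAlgHomMonomial (R := ℤ) (r := F.coeff β) β (le_rfl : n ≤ n)
    rw [AddMonoidAlgebra.leadingCoeff, supDegree_P (mem_support_iff.1 hβ),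
      Function.leftInverse_invFun toLex.injective _] at hP
    exact hP
  have hcoeffacc : coeff (accF α0) RHS = F.coeff α0 := by
    rw [← hEtoRHS, hsum, MvPolynomial.coeff_sum]
    rw [Finset.sum_eq_single_of_mem α0 hα0mem
      (fun β hβ hne => hother β hβ _ (((hα0max β hβ).lt_of_ne
        (fun h => hne (accF_injective (toLex.injective h))))))]
    exact hlead α0 hα0mem
  have hmemRHS : accF α0 ∈ RHS.support :=
    mem_support_iff.2 (by rw [hcoeffacc]; exact mem_support_iff.1 hα0mem)
  -- every monomial of RHS is lex-below lam
  have hDDle : ∀ S ∈ powersetCard (k + 1) (univ : Finset (Fin n)),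
      toLex (DD l S) ≤ toLex lam := by
    intro S hS
    rcases eq_or_ne S (Iic ik) with rfl | hne
    · exact le_rfl
    have hcard : S.card = (Iic ik).card := by
      rw [(Finset.mem_powersetCard.1 hS).2, hIic]
    have hnonempty : (Iic ik \ S).Nonempty := by
      rw [Finset.sdiff_nonempty]
      intro hsub
      exact hne (Finset.eq_of_subset_of_card_le hsub hcard.le).symm
    set w := (Iic ik \ S).min' hnonempty with hw
    have hwmem := Finset.min'_mem _ hnonempty
    rw [Finset.mem_sdiff] at hwmem
    refine le_of_lt ?_
    refine ⟨w, fun d hd => ?_, ?_⟩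
    · have hdIic : d ∈ Iic ik := Finset.mem_Iic.2 (le_of_lt (lt_of_lt_of_le hd
        (Finset.mem_Iic.1 hwmem.1)))
      have hdS : d ∈ S := by
        by_contra hdS
        exact absurd hd (not_lt_of_ge (Finset.min'_le _ _ (Finset.mem_sdiff.2 ⟨hdIic, hdS⟩)))
      show DD l S d = DD l (Iic ik) d
      rw [DD_apply, DD_apply, if_pos hdS, if_pos hdIic]
    · show DD l S w < DD l (Iic ik) w
      rw [DD_apply, DD_apply, if_neg hwmem.2, if_pos hwmem.1]
      exact hl
  have hacc0le : toLex (accF α0) ≤ toLex lam := by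
    have hmem := hmemRHS
    rw [hrhs] at hmem
    rw [mem_support_iff, MvPolynomial.coeff_sum] at hmem
    obtain ⟨S, hS, hSne⟩ := Finset.exists_ne_zero_of_sum_ne_zero hmem
    rw [coeff_monomial] at hSne
    have hEq : DD l S = accF α0 := by
      by_contra h; rw [if_neg h] at hSne; exact hSne rfl
    rw [← hEq]
    exact hDDle S hS
  have hall : ∀ α ∈ F.support, toLex (accF α) ≤ toLex lam :=
    fun α hα => (hα0max α hα).trans hacc0le
  -- degree bound
  have hdeg : ∀ α ∈ F.support, (∑ j, α j) ≤ l := by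
    intro α hα
    have h1 := lex_le_coord0 h0 (hall α hα)
    have h2 : accF α ⟨0, h0⟩ = ∑ j, α j := by
      rw [accF_apply]
      congr 1
      apply Finset.filter_true_of_mem
      intro i _; exact Nat.zero_le _
    have h3 : lam ⟨0, h0⟩ = l := by
      rw [hlam, DD_apply, if_pos (Finset.mem_Iic.2 (by exact Fin.mk_le_mk.2 (Nat.zero_le _)))]
    rwa [h2, h3] at h1
  -- RHS is homogeneous of degree (k+1) * l
  have hRhom : RHS.IsHomogeneous ((k + 1) * l) := by
    rw [hrhs]
    apply IsHomogeneous.sum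
    intro S hS
    apply isHomogeneous_monomial
    rw [degree_eq_sum_univ, DD_sum, (Finset.mem_powersetCard.1 hS).2]
  -- weighted homogeneity
  have hweight : ∀ α ∈ F.support, WW α = (k + 1) * l := by
    intro α hα
    by_contra hne
    set G : MvPolynomial (Fin n) ℤ :=
      ∑ β ∈ F.support.filter (fun β => WW β = WW α), monomial β (F.coeff β) with hG
    have hGval : ((esymmAlgHom (Fin n) ℤ n) G).val = 0 := by
      have h1 : ((esymmAlgHom (Fin n) ℤ n) G).val
          = ∑ β ∈ F.support.filter (fun β => WW β = WW α),
              esymmAlgHomMonomial (Fin n) β (F.coeff β) := by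
        rw [hG, map_sum (esymmAlgHom (Fin n) ℤ n), AddSubmonoidClass.coe_finset_sum]
        rfl
      have h2 : (homogeneousComponent (WW α)) RHS
          = ∑ β ∈ F.support.filter (fun β => WW β = WW α),
              esymmAlgHomMonomial (Fin n) β (F.coeff β) := by
        rw [← hEtoRHS, hsum, map_sum]
        rw [Finset.sum_filter]
        refine Finset.sum_congr rfl fun β _ => ?_
        rw [homogeneousComponent_of_mem (P_isHomog β (F.coeff β))]
        by_cases h : WW β = WW α
        · rw [if_pos h, if_pos h.symm]
        · rw [if_neg (fun hh => h hh.symm), if_neg h]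
      have h3 : (homogeneousComponent (WW α)) RHS = 0 := by
        rw [homogeneousComponent_of_mem hRhom, if_neg hne]
      rw [h1, ← h2, h3]
    have hGzero : G = 0 := by
      apply esymmAlgHom_fin_injective ℤ (le_rfl : n ≤ n)
      rw [map_zero]
      exact Subtype.val_injective (by rw [hGval]; rfl)
    have hcontra : coeff α G = F.coeff α := by
      rw [hG, MvPolynomial.coeff_sum]
      simp_rw [coeff_monomial]
      have hmem' : α ∈ F.support.filter (fun β => WW β = WW α) :=
        Finset.mem_filter.2 ⟨hα, rfl⟩
      rw [Finset.sum_eq_single_of_mem α hmem' (fun β _ hβne => if_neg hβne), if_pos rfl]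
    rw [hGzero] at hcontra
    simp only [MvPolynomial.coeff_zero] at hcontra
    exact (mem_support_iff.1 hα) hcontra.symm
  -- coefficient at the leading monomial
  have haccsingle : accF (Finsupp.single ik l) = lam := by
    apply DFunLike.ext
    intro j
    rw [accF_apply, hlam, DD_apply]
    by_cases h : j ≤ ik
    · rw [if_pos (Finset.mem_Iic.2 h)]
      exact (Finset.sum_eq_single ik (fun b _ hb => Finsupp.single_eq_of_ne' (Ne.symm hb))
        (fun hik => absurd (Finset.mem_filter.2 ⟨Finset.mem_univ _, h⟩) hik)).trans
        Finsupp.single_eq_same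
    · rw [if_neg (fun hh => h (Finset.mem_Iic.1 hh))]
      apply Finset.sum_eq_zero
      intro b hb
      refine Finsupp.single_eq_of_ne' (fun hbe => h ?_)
      have hjb := (Finset.mem_filter.1 hb).2
      exact hbe ▸ hjb
  have hother2 : ∀ β ∈ F.support, β ≠ Finsupp.single ik l →
      coeff lam (esymmAlgHomMonomial (Fin n) β (F.coeff β)) = 0 := by
    intro β hβ hne
    apply hother β hβ
    refine (hall β hβ).lt_of_ne ?_
    intro h
    exact hne (accF_injective (toLex.injective (h.trans (congrArg toLex haccsingle.symm))))
  have hsingle : F.coeff (Finsupp.single ik l) = 1 := by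
    by_cases hmem2 : Finsupp.single ik l ∈ F.support
    · rw [← hcoefflam, ← hEtoRHS, hsum, MvPolynomial.coeff_sum]
      rw [Finset.sum_eq_single_of_mem _ hmem2 (fun β hβ hne => hother2 β hβ hne)]
      rw [← haccsingle]
      exact (hlead _ hmem2).symm
    · exfalso
      have hz : coeff lam RHS = 0 := by
        rw [← hEtoRHS, hsum, MvPolynomial.coeff_sum]
        apply Finset.sum_eq_zero
        intro β hβ
        apply hother2 β hβ
        intro h; exact hmem2 (h ▸ hβ)
      rw [hcoefflam] at hz
      exact one_ne_zero hz
  exact ⟨hsingle, fun α hα => ⟨hweight α hα, hdeg α hα⟩⟩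

end Stmt14Aux

namespace Stmt14Aux

open Finset

set_option maxHeartbeats 1000000 in
lemma main (N l : ℕ) (hl : 0 < l) (i : Fin N) (F : MvPolynomial (Fin (N + 1)) ℤ)
    (hF : aeval (fun j : Fin (N + 1) => esymm (Fin (N + 1)) ℤ ((j : ℕ) + 1)) F =
          aeval (fun j : Fin (N + 1) => (X j : MvPolynomial (Fin (N + 1)) ℤ) ^ l)
            (esymm (Fin (N + 1)) ℤ ((i : ℕ) + 1)))
    (f : MvPolynomial (Fin N) ℤ)
    (hf : f = aeval (fun j : Fin (N + 1) =>
        if h : (j : ℕ) < N then (X (⟨j, h⟩ : Fin N) : MvPolynomial (Fin N) ℤ)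
        else 1) F) :
    f.coeff (Finsupp.single i l) = 1 ∧
    ∀ m ∈ f.support, m ≠ Finsupp.single i l →
      drlLt m (Finsupp.single i l) ∧ (∑ j, m j) ≤ l ∧ ∀ j, m j < l := by
  classical
  set g : Fin (N + 1) → MvPolynomial (Fin N) ℤ :=
    fun j => if h : (j : ℕ) < N then X ⟨j, h⟩ else 1 with hg
  have hki : (i : ℕ) < N + 1 := lt_of_lt_of_le i.isLt (Nat.le_succ N)
  obtain ⟨hc1, hsupp⟩ := keyF (Nat.succ_pos N) hl hki F hF
  have hc1' : F.coeff (Finsupp.single (Fin.castSucc i) l) = 1 := hc1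
  -- restriction of exponents
  set res : (Fin (N + 1) →₀ ℕ) → (Fin N →₀ ℕ) :=
    fun α => Finsupp.equivFunOnFinite.symm (fun k : Fin N => α (Fin.castSucc k)) with hresdef
  have hres_apply : ∀ (α : Fin (N + 1) →₀ ℕ) (k : Fin N), res α k = α (Fin.castSucc k) :=
    fun _ _ => rfl
  have hgcast : ∀ k : Fin N, g (Fin.castSucc k) = X k := by
    intro k
    show (if h : ((Fin.castSucc k : Fin (N + 1)) : ℕ) < N then
      (X (⟨(Fin.castSucc k : Fin (N + 1)), h⟩ : Fin N) : MvPolynomial (Fin N) ℤ) else 1) = X k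
    rw [dif_pos (show ((Fin.castSucc k : Fin (N + 1)) : ℕ) < N from k.isLt)]
    exact congrArg X (Fin.ext rfl)
  have hglast : g (Fin.last N) = 1 := by
    show (if h : ((Fin.last N : Fin (N + 1)) : ℕ) < N then
      (X (⟨(Fin.last N : Fin (N + 1)), h⟩ : Fin N) : MvPolynomial (Fin N) ℤ) else 1) = 1
    rw [dif_neg (by simp)]
  have hmono : ∀ (α : Fin (N + 1) →₀ ℕ) (c : ℤ),
      aeval g (monomial α c) = monomial (res α) c := by
    intro α c
    rw [aeval_monomial, Finsupp.prod_fintype _ _ (fun j => pow_zero _)]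
    rw [Fin.prod_univ_castSucc]
    rw [hglast, one_pow, mul_one]
    rw [Finset.prod_congr rfl (fun k _ => by rw [hgcast k, ← hres_apply α k])]
    rw [monomial_eq, Finsupp.prod_fintype _ _ (fun j => pow_zero _)]
    rfl
  have hfsum : f = ∑ α ∈ F.support, monomial (res α) (F.coeff α) := by
    rw [hf]
    conv_lhs => rw [F.as_sum]
    rw [map_sum]
    exact Finset.sum_congr rfl fun α _ => hmono α _
  have hcoeff_f : ∀ m : Fin N →₀ ℕ,
      f.coeff m = ∑ α ∈ F.support, if res α = m then F.coeff α else 0 := by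
    intro m; rw [hfsum, coeff_sum]; simp_rw [coeff_monomial]
  have hsplitW : ∀ α : Fin (N + 1) →₀ ℕ, (∑ j : Fin (N + 1), ((j : ℕ) + 1) * α j)
      = (∑ k : Fin N, ((k : ℕ) + 1) * α (Fin.castSucc k)) + (N + 1) * α (Fin.last N) := by
    intro α
    rw [Fin.sum_univ_castSucc]
    simp [Fin.coe_castSucc, Fin.val_last]
  have hsplitS : ∀ α : Fin (N + 1) →₀ ℕ, (∑ j : Fin (N + 1), α j)
      = (∑ k : Fin N, α (Fin.castSucc k)) + α (Fin.last N) :=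
    fun α => Fin.sum_univ_castSucc (fun j => α j)
  have hres_single : res (Finsupp.single (Fin.castSucc i) l) = Finsupp.single i l := by
    apply DFunLike.ext; intro k
    rw [hres_apply, Finsupp.single_apply, Finsupp.single_apply]
    by_cases h : i = k
    · subst h; rw [if_pos rfl, if_pos rfl]
    · rw [if_neg (fun hh => h (Fin.castSucc_inj.1 hh)), if_neg h]
  have hWsingle : (∑ k : Fin N, ((k : ℕ) + 1) * (Finsupp.single i l) k) = ((i : ℕ) + 1) * l := by
    rw [Finset.sum_eq_single i (fun b _ hb => by
        rw [Finsupp.single_eq_of_ne' (Ne.symm hb), mul_zero])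
      (fun h => absurd (Finset.mem_univ i) h), Finsupp.single_eq_same]
  have hext : ∀ α ∈ F.support, res α = Finsupp.single i l →
      α = Finsupp.single (Fin.castSucc i) l := by
    intro α hα hres
    have hW : (∑ j : Fin (N + 1), ((j : ℕ) + 1) * α j) = ((i : ℕ) + 1) * l := (hsupp α hα).1
    have hcast : ∀ k : Fin N, α (Fin.castSucc k) = (Finsupp.single i l) k := fun k => by
      rw [← hres_apply α k, hres]
    have hWsum : (∑ k : Fin N, ((k : ℕ) + 1) * α (Fin.castSucc k)) = ((i : ℕ) + 1) * l := by
      simp_rw [hcast]; exact hWsingle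
    have hlastzero : α (Fin.last N) = 0 := by
      have h1 : ((i : ℕ) + 1) * l = ((i : ℕ) + 1) * l + (N + 1) * α (Fin.last N) := by
        conv_lhs => rw [← hW, hsplitW α, hWsum]
      have h2 : (N + 1) * α (Fin.last N) = 0 := (Nat.left_eq_add).1 h1
      exact (Nat.mul_eq_zero.1 h2).resolve_left (Nat.succ_ne_zero N)
    apply DFunLike.ext; intro j
    induction j using Fin.lastCases with
    | last =>
      rw [hlastzero, Finsupp.single_apply, if_neg]
      intro hh
      have := congrArg Fin.val hh
      simp only [Fin.coe_castSucc, Fin.val_last] at this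
      omega
    | cast k =>
      rw [hcast k, Finsupp.single_apply, Finsupp.single_apply]
      by_cases h : i = k
      · subst h; rw [if_pos rfl, if_pos rfl]
      · rw [if_neg h, if_neg (fun hh => h (Fin.castSucc_inj.1 hh))]
  have hmemF : Finsupp.single (Fin.castSucc i) l ∈ F.support :=
    MvPolynomial.mem_support_iff.2 (by rw [hc1']; exact one_ne_zero)
  constructor
  · rw [hcoeff_f]
    rw [Finset.sum_eq_single_of_mem _ hmemF (fun β hβ hne => by
      by_cases h : res β = Finsupp.single i l
      · exact absurd (hext β hβ h) hne
      · rw [if_neg h])]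
    rw [if_pos hres_single]
    exact hc1'
  · intro m hm hne
    have hmne : f.coeff m ≠ 0 := MvPolynomial.mem_support_iff.1 hm
    rw [hcoeff_f] at hmne
    obtain ⟨α, hα, hαne⟩ := Finset.exists_ne_zero_of_sum_ne_zero hmne
    have hresα : res α = m := by
      by_contra h; rw [if_neg h] at hαne; exact hαne rfl
    have hcast : ∀ k : Fin N, m k = α (Fin.castSucc k) := fun k => by
      rw [← hresα, hres_apply]
    have hS : (∑ j : Fin (N + 1), α j) ≤ l := (hsupp α hα).2
    have hW : (∑ j : Fin (N + 1), ((j : ℕ) + 1) * α j) = ((i : ℕ) + 1) * l := (hsupp α hα).1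
    have hsum_m_le : (∑ k : Fin N, m k) ≤ l := by
      have h1 : (∑ k : Fin N, m k) = ∑ k : Fin N, α (Fin.castSucc k) := by
        exact Finset.sum_congr rfl fun k _ => hcast k
      have h2 := hsplitS α
      omega
    have hsum_single : (∑ j : Fin N, (Finsupp.single i l) j) = l := sum_single_univ i l
    have hexp : ∀ j : Fin N, m j < l := by
      intro j
      have hle : m j ≤ ∑ k : Fin N, m k :=
        Finset.single_le_sum (f := fun k => m k) (fun _ _ => Nat.zero_le _) (Finset.mem_univ j)
      rcases lt_or_eq_of_le (hle.trans hsum_m_le) with h | h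
      · exact h
      exfalso
      have h1 : (∑ k : Fin N, m k) = l := le_antisymm hsum_m_le (h ▸ hle)
      have hzero : ∀ k : Fin N, k ≠ j → m k = 0 := by
        intro k hk
        have h4 : (∑ x ∈ univ.erase k, m x) + m k = l := by
          rw [Finset.sum_erase_add univ _ (Finset.mem_univ k)]; exact h1
        have h5 : m j ≤ ∑ x ∈ univ.erase k, m x :=
          Finset.single_le_sum (f := fun k => m k) (fun _ _ => Nat.zero_le _)
            (Finset.mem_erase.2 ⟨Ne.symm hk, Finset.mem_univ j⟩)
        omega
      have hlast : α (Fin.last N) = 0 := by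
        have h6 := hsplitS α
        have h7 : (∑ k : Fin N, α (Fin.castSucc k)) = l := by
          rw [← Finset.sum_congr rfl fun k _ => hcast k]; exact h1
        omega
      have h8 : (∑ k : Fin N, ((k : ℕ) + 1) * m k) = ((i : ℕ) + 1) * l := by
        have h6 := hsplitW α
        rw [hlast, mul_zero, add_zero, hW] at h6
        calc (∑ k : Fin N, ((k : ℕ) + 1) * m k)
            = ∑ k : Fin N, ((k : ℕ) + 1) * α (Fin.castSucc k) :=
              Finset.sum_congr rfl fun k _ => by rw [hcast k]
          _ = ((i : ℕ) + 1) * l := h6.symm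
      have h9 : (∑ k : Fin N, ((k : ℕ) + 1) * m k) = ((j : ℕ) + 1) * l := by
        rw [Finset.sum_eq_single j (fun b _ hb => by rw [hzero b hb, mul_zero])
          (fun hj => absurd (Finset.mem_univ j) hj), h]
      have h10 : ((j : ℕ) + 1) = ((i : ℕ) + 1) :=
        Nat.eq_of_mul_eq_mul_right hl (by rw [← h9, h8])
      apply hne
      apply DFunLike.ext; intro k
      by_cases hk : k = j
      · subst hk; rw [h, Finsupp.single_apply, if_pos (Fin.ext (by omega))]
      · rw [hzero k hk, Finsupp.single_apply, if_neg]
        intro hik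
        apply hk
        apply Fin.ext
        have := congrArg Fin.val hik
        omega
    refine ⟨?_, hsum_m_le, hexp⟩
    rcases lt_or_eq_of_le hsum_m_le with hlt | heq
    · exact Or.inl (by rw [hsum_single]; exact hlt)
    · refine Or.inr ⟨by rw [hsum_single, heq], ?_⟩
      set Sd := univ.filter (fun j : Fin N => m j ≠ (Finsupp.single i l) j) with hSd
      have hSdne : Sd.Nonempty := by
        rw [Finset.filter_nonempty_iff]
        by_contra h
        push_neg at h
        exact hne (DFunLike.ext _ _ fun k => by
          by_contra hk
          exact hk (h k (Finset.mem_univ k)))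
      set j0 := Sd.max' hSdne with hj0
      have hj0mem : m j0 ≠ (Finsupp.single i l) j0 :=
        (Finset.mem_filter.1 (Finset.max'_mem Sd hSdne)).2
      by_cases hij0 : i < j0
      · refine ⟨j0, ?_, ?_⟩
        · rw [Finsupp.single_apply, if_neg (Fin.ne_of_lt hij0)]
          refine Nat.pos_of_ne_zero (fun h0' => hj0mem ?_)
          rw [h0', Finsupp.single_apply, if_neg (Fin.ne_of_lt hij0)]
        · intro j hj
          by_contra hne2
          exact absurd (Finset.le_max' Sd j (Finset.mem_filter.2 ⟨Finset.mem_univ _, hne2⟩))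
            (not_le_of_gt hj)
      · exfalso
        have hsuppm : ∀ j : Fin N, m j ≠ 0 → (j : ℕ) ≤ (i : ℕ) := by
          intro j hj
          by_contra hgt
          have hij : i < j := Fin.lt_def.2 (by omega)
          have hjS : j ∈ Sd := Finset.mem_filter.2 ⟨Finset.mem_univ _, by
            rw [Finsupp.single_apply, if_neg (Fin.ne_of_lt hij)]; exact hj⟩
          exact hij0 (lt_of_lt_of_le hij (Finset.le_max' Sd j hjS))
        have hlast : α (Fin.last N) = 0 := by
          have h6 := hsplitS α
          have h7 : (∑ k : Fin N, α (Fin.castSucc k)) = l := by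
            rw [← Finset.sum_congr rfl fun k _ => hcast k]; exact heq
          omega
        have h8 : (∑ k : Fin N, ((k : ℕ) + 1) * m k) = ((i : ℕ) + 1) * l := by
          have h6 := hsplitW α
          rw [hlast, mul_zero, add_zero, hW] at h6
          calc (∑ k : Fin N, ((k : ℕ) + 1) * m k)
              = ∑ k : Fin N, ((k : ℕ) + 1) * α (Fin.castSucc k) :=
                Finset.sum_congr rfl fun k _ => by rw [hcast k]
            _ = ((i : ℕ) + 1) * l := h6.symm
        have hle : ∀ k : Fin N, ((k : ℕ) + 1) * m k ≤ ((i : ℕ) + 1) * m k := by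
          intro k
          by_cases h : m k = 0
          · rw [h, mul_zero, mul_zero]
          · exact Nat.mul_le_mul_right _ (by have := hsuppm k h; omega)
        have heqsum : (∑ k : Fin N, ((k : ℕ) + 1) * m k)
            = ∑ k : Fin N, ((i : ℕ) + 1) * m k := by
          rw [h8, ← Finset.mul_sum, heq]
        have hpt := (Finset.sum_eq_sum_iff_of_le (fun k _ => hle k)).1 heqsum
        have hzero : ∀ k : Fin N, k ≠ i → m k = 0 := by
          intro k hk
          by_contra h
          have h2 := hpt k (Finset.mem_univ k)
          have h3 := Nat.eq_of_mul_eq_mul_right (Nat.pos_of_ne_zero h) h2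
          exact hk (Fin.ext (by omega))
        have hmi : m i = l := by
          rw [← heq, Finset.sum_eq_single i (fun b _ hb => hzero b hb)
            (fun h => absurd (Finset.mem_univ i) h)]
        apply hne
        apply DFunLike.ext; intro k
        by_cases hk : k = i
        · subst hk; rw [hmi, Finsupp.single_eq_same]
        · rw [hzero k hk, Finsupp.single_apply, if_neg (fun h => hk h.symm)]

end Stmt14Aux

theorem stmt14 (n l : ℕ) (hn : 2 ≤ n) (hodd : Odd l) (hl : 1 < l) (i : Fin (n - 1))
    (F : MvPolynomial (Fin n) ℤ)
    (hF : aeval (fun j : Fin n => esymm (Fin n) ℤ ((j : ℕ) + 1)) F =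
          aeval (fun j : Fin n => (X j : MvPolynomial (Fin n) ℤ) ^ l)
            (esymm (Fin n) ℤ ((i : ℕ) + 1)))
    (f : MvPolynomial (Fin (n - 1)) ℤ)
    (hf : f = aeval (fun j : Fin n =>
        if h : (j : ℕ) < n - 1 then (X (⟨j, h⟩ : Fin (n - 1)) : MvPolynomial (Fin (n - 1)) ℤ)
        else 1) F) :
    f.coeff (Finsupp.single i l) = 1 ∧
    ∀ m ∈ f.support, m ≠ Finsupp.single i l →
      drlLt m (Finsupp.single i l) ∧ (∑ j, m j) ≤ l ∧ ∀ j, m j < l := by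
  obtain ⟨N, rfl⟩ : ∃ N, n = N + 1 := ⟨n - 1, by omega⟩
  exact Stmt14Aux.main N l (by omega) i F hF f hf
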